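/- Directed single linkage is stable: for all finite networks N_X and N_Y, d_N((X, ũ*_X), (Y, ũ*_Y)) ≤ d_N(N_X, N_Y), where ũ*_X and ũ*_Y are the directed minimum chain cost quasi-ultrametrics of N_X and N_Y respectively. -/

import Mathlib

/-- The cost of a chain: maximum dissimilarity over consecutive links. -/
def chainCost {X : Type*} (A : X → X → ℝ) : List X → ℝ
  | [] => 0
  | [_] => 0
  | a :: b :: rest => max (A a b) (chainCost A (b :: rest))

/-- The directed minimum chain cost `ũ*` of a network `(X, A)`: the minimum,
over all chains from `x` to `x'`, of the maximum link dissimilarity. -/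
noncomputable def dmcc {X : Type*} (A : X → X → ℝ) (x x' : X) : ℝ :=
  sInf {r | ∃ c : List X, c.head? = some x ∧ c.getLast? = some x' ∧ chainCost A c = r}

/-- A correspondence between `X` and `Y`: a relation projecting onto both. -/
def IsCorrespondence {X Y : Type*} (R : Set (X × Y)) : Prop :=
  (∀ x : X, ∃ y : Y, (x, y) ∈ R) ∧ (∀ y : Y, ∃ x : X, (x, y) ∈ R)

/-- The distortion of a correspondence `R` between networks `(X, AX)` and
`(Y, AY)`. -/
noncomputable def distortion {X Y : Type*} (AX : X → X → ℝ) (AY : Y → Y → ℝ)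
    (R : Set (X × Y)) : ℝ :=
  sSup {r | ∃ p ∈ R, ∃ q ∈ R, r = |AX p.1 q.1 - AY p.2 q.2|}

/-- The network distance: half the minimal distortion over correspondences. -/
noncomputable def netDist {X Y : Type*} (AX : X → X → ℝ) (AY : Y → Y → ℝ) : ℝ :=
  (1/2) * sInf {r | ∃ R : Set (X × Y), IsCorrespondence R ∧ r = distortion AX AY R}

section Aux

variable {X Y : Type*}

lemma chainCost_nonneg (A : X → X → ℝ) (hA : ∀ a b, 0 ≤ A a b) :
    ∀ c : List X, 0 ≤ chainCost A c
  | [] => le_refl 0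
  | [_] => le_refl 0
  | a :: b :: rest =>
      le_trans (chainCost_nonneg A hA (b :: rest)) (le_max_right _ _)

lemma chainCost_mem (A : X → X → ℝ) :
    ∀ c : List X, chainCost A c ∈ insert (0:ℝ) (Set.range fun p : X × X => A p.1 p.2)
  | [] => Set.mem_insert _ _
  | [_] => Set.mem_insert _ _
  | a :: b :: rest => by
      rcases max_choice (A a b) (chainCost A (b :: rest)) with h | h
      · rw [show chainCost A (a :: b :: rest) = max (A a b) (chainCost A (b :: rest)) from rfl, h]
        exact Set.mem_insert_iff.mpr (Or.inr ⟨(a, b), rfl⟩)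
      · rw [show chainCost A (a :: b :: rest) = max (A a b) (chainCost A (b :: rest)) from rfl, h]
        exact chainCost_mem A (b :: rest)

/-- The set of chain costs from `x` to `x'`. -/
def chainSet (A : X → X → ℝ) (x x' : X) : Set ℝ :=
  {r | ∃ c : List X, c.head? = some x ∧ c.getLast? = some x' ∧ chainCost A c = r}

lemma chainSet_nonempty (A : X → X → ℝ) (x x' : X) : (chainSet A x x').Nonempty :=
  ⟨chainCost A [x, x'], [x, x'], rfl, rfl, rfl⟩

lemma chainSet_finite [Fintype X] (A : X → X → ℝ) (x x' : X) :
    (chainSet A x x').Finite := by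
  apply Set.Finite.subset (Set.Finite.insert (0:ℝ)
    (Set.finite_range fun p : X × X => A p.1 p.2))
  rintro r ⟨c, -, -, rfl⟩
  exact chainCost_mem A c

lemma chainSet_bddBelow (A : X → X → ℝ) (hA : ∀ a b, 0 ≤ A a b) (x x' : X) :
    0 ∈ lowerBounds (chainSet A x x') := by
  rintro r ⟨c, -, -, rfl⟩
  exact chainCost_nonneg A hA c

lemma dmcc_mem [Fintype X] (A : X → X → ℝ) (x x' : X) :
    dmcc A x x' ∈ chainSet A x x' :=
  (chainSet_nonempty A x x').csInf_mem (chainSet_finite A x x')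

lemma chainCost_cons_le (A : X → X → ℝ) (a b : X) (rest : List X) :
    chainCost A (b :: rest) ≤ chainCost A (a :: b :: rest) :=
  le_max_right _ _

lemma chain'_le_chainCost (A : X → X → ℝ) :
    ∀ c : List X, c.Chain' (fun a b => A a b ≤ chainCost A c)
  | [] => List.isChain_nil
  | [_] => List.isChain_singleton _
  | a :: b :: rest => by
      refine List.IsChain.cons_cons (le_max_left _ _) ?_
      exact (chain'_le_chainCost A (b :: rest)).imp
        (fun u v h => le_trans h (chainCost_cons_le A a b rest))

lemma chainCost_le_of_chain' (A : X → X → ℝ) {B : ℝ} (hB : 0 ≤ B) :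
    ∀ c : List X, c.Chain' (fun a b => A a b ≤ B) → chainCost A c ≤ B
  | [], _ => hB
  | [_], _ => hB
  | a :: b :: rest, h => by
      rcases List.isChain_cons_cons.mp h with ⟨h1, h2⟩
      exact max_le h1 (chainCost_le_of_chain' A hB (b :: rest) h2)

/-- Key lemma: one-sided comparison of directed minimum chain costs. -/
lemma dmcc_le_dmcc_add [Fintype X] [Fintype Y]
    (AX : X → X → ℝ) (AY : Y → Y → ℝ)
    (hXnonneg : ∀ x x', 0 ≤ AX x x') (hXid : ∀ x x', AX x x' = 0 ↔ x = x')
    (hYnonneg : ∀ y y', 0 ≤ AY y y')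
    (R : Set (X × Y)) (hR1 : ∀ x : X, ∃ y : Y, (x, y) ∈ R)
    {η : ℝ}
    (hdist : ∀ p ∈ R, ∀ q ∈ R, |AX p.1 q.1 - AY p.2 q.2| ≤ η)
    {x x' : X} {y y' : Y} (hx : (x, y) ∈ R) (hx' : (x', y') ∈ R) :
    dmcc AY y y' ≤ dmcc AX x x' + η := by
  have hη : 0 ≤ η := le_trans (abs_nonneg _) (hdist (x, y) hx (x, y) hx)
  -- choice function lifting X to Y along R
  let φ : X → Y := fun a => (hR1 a).choose
  have hφ : ∀ a, (a, φ a) ∈ R := fun a => (hR1 a).choose_spec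
  -- a minimizing chain in X
  obtain ⟨c, hch, hcl, hcc⟩ := dmcc_mem AX x x'
  set B : ℝ := dmcc AX x x' + η with hB
  have hB0 : 0 ≤ B := by
    have := chainSet_bddBelow AX hXnonneg x x' ⟨c, hch, hcl, hcc⟩
    rw [hB]; linarith
  -- the lifted chain
  set L : List Y := y :: (List.map φ c ++ [y']) with hL
  have hkey : ∀ a b : X, AY (φ a) (φ b) ≤ AX a b + η := by
    intro a b
    have := hdist (a, φ a) (hφ a) (b, φ b) (hφ b)
    have := abs_le.mp this
    simp only at this
    linarith [this.1]
  have hendpt : ∀ a : X, AY y (φ a) ≤ AX x a + η := by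
    intro a
    have := abs_le.mp (hdist (x, y) hx (a, φ a) (hφ a))
    simp only at this
    linarith [this.1]
  have hendpt' : ∀ a : X, AY (φ a) y' ≤ AX a x' + η := by
    intro a
    have := abs_le.mp (hdist (a, φ a) (hφ a) (x', y') hx')
    simp only at this
    linarith [this.1]
  -- L is a chain with links bounded by B
  have hchain : L.Chain' (fun a b => AY a b ≤ B) := by
    rw [hL]; unfold List.Chain'; rw [List.isChain_cons]
    constructor
    · intro b hb
      rw [List.head?_append_of_ne_nil] at hb
      · rw [List.head?_map, hch] at hb
        simp only [Option.map_some, Option.mem_def, Option.some.injEq] at hb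
        subst hb
        calc AY y (φ x) ≤ AX x x + η := hendpt x
          _ = η := by rw [(hXid x x).mpr rfl]; ring
          _ ≤ B := by
              have := chainSet_bddBelow AX hXnonneg x x' ⟨c, hch, hcl, hcc⟩
              rw [hB]; linarith
      · intro hnil
        apply List.map_eq_nil_iff.mp at hnil
        subst hnil; simp at hch
    · rw [List.isChain_append]
      refine ⟨?_, List.isChain_singleton _, ?_⟩
      · rw [List.isChain_map]
        have hbound : 0 ≤ dmcc AX x x' :=
          chainSet_bddBelow AX hXnonneg x x' ⟨c, hch, hcl, hcc⟩
        refine (chain'_le_chainCost AX c).imp ?_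
        intro a b hab
        calc AY (φ a) (φ b) ≤ AX a b + η := hkey a b
          _ ≤ chainCost AX c + η := by linarith
          _ = B := by rw [hB, hcc]
      · intro a ha b hb
        rw [List.getLast?_map, hcl] at ha
        simp only [Option.map_some, Option.mem_def, Option.some.injEq] at ha
        simp only [List.head?_cons, Option.mem_def, Option.some.injEq] at hb
        subst ha; subst hb
        calc AY (φ x') y' ≤ AX x' x' + η := hendpt' x'
          _ = η := by rw [(hXid x' x').mpr rfl]; ring
          _ ≤ B := by
              have := chainSet_bddBelow AX hXnonneg x x' ⟨c, hch, hcl, hcc⟩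
              rw [hB]; linarith
  have hLcost : chainCost AY L ≤ B := chainCost_le_of_chain' AY hB0 L hchain
  have hLmem : chainCost AY L ∈ chainSet AY y y' := by
    refine ⟨L, rfl, ?_, rfl⟩
    rw [hL, show y :: (List.map φ c ++ [y']) = (y :: List.map φ c) ++ [y'] from rfl,
      List.getLast?_concat]
  calc dmcc AY y y' ≤ chainCost AY L := by
        exact csInf_le ⟨0, chainSet_bddBelow AY hYnonneg y y'⟩ hLmem
    _ ≤ B := hLcost

lemma distortion_set_finite [Fintype X] [Fintype Y]
    (AX : X → X → ℝ) (AY : Y → Y → ℝ) (R : Set (X × Y)) :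
    {r | ∃ p ∈ R, ∃ q ∈ R, r = |AX p.1 q.1 - AY p.2 q.2|}.Finite := by
  apply Set.Finite.subset (Set.finite_range
    fun pq : (X × Y) × (X × Y) => |AX pq.1.1 pq.2.1 - AY pq.1.2 pq.2.2|)
  rintro r ⟨p, -, q, -, rfl⟩
  exact ⟨(p, q), rfl⟩

lemma distortion_bddAbove [Fintype X] [Fintype Y]
    (AX : X → X → ℝ) (AY : Y → Y → ℝ) (R : Set (X × Y)) :
    BddAbove {r | ∃ p ∈ R, ∃ q ∈ R, r = |AX p.1 q.1 - AY p.2 q.2|} :=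
  (distortion_set_finite AX AY R).bddAbove

lemma le_distortion [Fintype X] [Fintype Y]
    (AX : X → X → ℝ) (AY : Y → Y → ℝ) (R : Set (X × Y))
    {p q : X × Y} (hp : p ∈ R) (hq : q ∈ R) :
    |AX p.1 q.1 - AY p.2 q.2| ≤ distortion AX AY R :=
  le_csSup (distortion_bddAbove AX AY R) ⟨p, hp, q, hq, rfl⟩

lemma distortion_nonneg [Fintype X] [Fintype Y]
    (AX : X → X → ℝ) (AY : Y → Y → ℝ) {R : Set (X × Y)}
    {p : X × Y} (hp : p ∈ R) : 0 ≤ distortion AX AY R :=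
  le_trans (abs_nonneg _) (le_distortion AX AY R hp hp)

end Aux

/-- Directed single linkage is stable: the network distance
between the output quasi-ultrametrics is bounded by the network distance
between the input networks. -/
theorem dsl_stable {X Y : Type*}
    [Fintype X] [Fintype Y] [Nonempty X] [Nonempty Y]
    (AX : X → X → ℝ) (AY : Y → Y → ℝ)
    (hXnonneg : ∀ x x', 0 ≤ AX x x') (hXid : ∀ x x', AX x x' = 0 ↔ x = x')
    (hYnonneg : ∀ y y', 0 ≤ AY y y') (hYid : ∀ y y', AY y y' = 0 ↔ y = y') :
    netDist (dmcc AX) (dmcc AY) ≤ netDist AX AY := by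
  unfold netDist
  have h2 : (0:ℝ) ≤ 1/2 := by norm_num
  refine mul_le_mul_of_nonneg_left ?_ h2
  -- key: for every correspondence R, the distortion on dmcc's is ≤ distortion on A's
  have key : ∀ R : Set (X × Y), IsCorrespondence R →
      distortion (dmcc AX) (dmcc AY) R ≤ distortion AX AY R := by
    intro R hR
    obtain ⟨y0, hy0⟩ := hR.1 (Classical.arbitrary X)
    set η := distortion AX AY R with hηdef
    have hdist : ∀ p ∈ R, ∀ q ∈ R, |AX p.1 q.1 - AY p.2 q.2| ≤ η :=
      fun p hp q hq => le_distortion AX AY R hp hq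
    have hrw : distortion (dmcc AX) (dmcc AY) R =
        sSup {r | ∃ p ∈ R, ∃ q ∈ R, r = |dmcc AX p.1 q.1 - dmcc AY p.2 q.2|} := rfl
    rw [hrw]
    refine csSup_le ⟨|dmcc AX (Classical.arbitrary X) (Classical.arbitrary X) -
        dmcc AY y0 y0|,
      ⟨(Classical.arbitrary X, y0), hy0, (Classical.arbitrary X, y0), hy0, rfl⟩⟩ ?_
    rintro r ⟨p, hp, q, hq, rfl⟩
    rw [abs_le]
    constructor
    · -- dmcc AY ≤ dmcc AX + η
      have := dmcc_le_dmcc_add AX AY hXnonneg hXid hYnonneg R hR.1 hdist hp hq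
      linarith
    · -- dmcc AX ≤ dmcc AY + η
      set R' : Set (Y × X) := Prod.swap '' R with hR'def
      have hR'1 : ∀ b : Y, ∃ a : X, (b, a) ∈ R' := by
        intro b
        obtain ⟨a, ha⟩ := hR.2 b
        exact ⟨a, ⟨(a, b), ha, rfl⟩⟩
      have hdist' : ∀ p' ∈ R', ∀ q' ∈ R', |AY p'.1 q'.1 - AX p'.2 q'.2| ≤ η := by
        rintro p' ⟨p1, hp1, rfl⟩ q' ⟨q1, hq1, rfl⟩
        rw [abs_sub_comm]
        exact hdist p1 hp1 q1 hq1
      have hp' : (p.2, p.1) ∈ R' := ⟨p, hp, rfl⟩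
      have hq' : (q.2, q.1) ∈ R' := ⟨q, hq, rfl⟩
      have := dmcc_le_dmcc_add AY AX hYnonneg hYid hXnonneg R' hR'1 hdist' hp' hq'
      linarith
  -- compare the two infima
  have hS'bdd : BddBelow {r | ∃ R : Set (X × Y),
      IsCorrespondence R ∧ r = distortion (dmcc AX) (dmcc AY) R} := by
    refine ⟨0, ?_⟩
    rintro r ⟨R, hR, rfl⟩
    obtain ⟨y0, hy0⟩ := hR.1 (Classical.arbitrary X)
    exact distortion_nonneg (dmcc AX) (dmcc AY) hy0
  have hSne : {r | ∃ R : Set (X × Y),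
      IsCorrespondence R ∧ r = distortion AX AY R}.Nonempty := by
    refine ⟨distortion AX AY Set.univ, Set.univ, ⟨?_, ?_⟩, rfl⟩
    · exact fun x => ⟨Classical.arbitrary Y, Set.mem_univ _⟩
    · exact fun y => ⟨Classical.arbitrary X, Set.mem_univ _⟩
  apply le_csInf hSne
  rintro b ⟨R, hR, rfl⟩
  exact le_trans (csInf_le hS'bdd ⟨R, hR, rfl⟩) (key R hR)
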